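/- For fixed α with 0 ≤ α < 1, as N → ∞, cos θ₁ = ((N−2) + √(N² − 4N^α + 4N^{2α}/(N + N^α − 1)))/(2(N−1)) satisfies cos θ₁ = 1 − N^{α−2} + o(N^{α−2}). -/

import Mathlib

open Filter Real Asymptotics Topology

theorem cos_theta_one_asymptotics (α : ℝ) (h0 : 0 ≤ α) (h1 : α < 1) :
    (fun N : ℝ =>
        ((N - 2) + Real.sqrt (N ^ 2 - 4 * N ^ α + 4 * N ^ (2 * α) / (N + N ^ α - 1)))
            / (2 * (N - 1)) - (1 - N ^ (α - 2)))
      =o[atTop] fun N : ℝ => N ^ (α - 2) := by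
  rw [isLittleO_iff_tendsto' (by
    filter_upwards [eventually_gt_atTop (0:ℝ)] with N hN h
    exact absurd h (ne_of_gt (Real.rpow_pos_of_pos hN _)))]
  -- limits of basic pieces
  have hda : Tendsto (fun N : ℝ => N + N ^ α - 1) atTop atTop := by
    apply tendsto_atTop_mono' atTop (f₁ := fun N : ℝ => N - 1)
    · filter_upwards [eventually_ge_atTop (1:ℝ)] with N hN
      have : 0 < N ^ α := Real.rpow_pos_of_pos (by linarith) _
      linarith
    · exact Tendsto.congr (fun x => by simp only [id]; ring) (tendsto_atTop_add_const_right atTop (-1 : ℝ) tendsto_id)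
  have hinv : Tendsto (fun N : ℝ => (N + N ^ α - 1)⁻¹) atTop (𝓝 0) :=
    tendsto_inv_atTop_zero.comp hda
  have hpow : ∀ β : ℝ, β < 0 → Tendsto (fun N : ℝ => N ^ β) atTop (𝓝 0) := by
    intro β hβ
    have := tendsto_rpow_neg_atTop (y := -β) (by linarith)
    simpa using this
  -- A = (N + N^α - 1)/N → 1
  have hA : Tendsto (fun N : ℝ => (N + N ^ α - 1) / N) atTop (𝓝 1) := by
    have h2 : Tendsto (fun N : ℝ => 1 + N ^ (α - 1) - N⁻¹) atTop (𝓝 1) := by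
      have := (tendsto_const_nhds (x := (1:ℝ)) (f := atTop)).add
        (hpow (α - 1) (by linarith)) |>.sub tendsto_inv_atTop_zero
      simpa using this
    refine h2.congr' ?_
    filter_upwards [eventually_gt_atTop (0:ℝ)] with N hN
    have hr : N ^ (α - 1) = N ^ α / N := by
      rw [Real.rpow_sub hN, Real.rpow_one]
    rw [hr]
    field_simp
  -- T = S/N^2 → 1
  have hT : Tendsto (fun N : ℝ =>
      (N ^ 2 - 4 * N ^ α + 4 * N ^ (2 * α) / (N + N ^ α - 1)) / N ^ 2) atTop (𝓝 1) := by
    have h2 : Tendsto (fun N : ℝ =>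
        1 - 4 * N ^ (α - 2) + 4 * N ^ (2 * α - 2) * (N + N ^ α - 1)⁻¹) atTop (𝓝 1) := by
      have := ((tendsto_const_nhds (x := (1:ℝ)) (f := atTop)).sub
        ((hpow (α - 2) (by linarith)).const_mul 4)).add
        (((hpow (2 * α - 2) (by linarith)).const_mul 4).mul hinv)
      simpa using this
    refine h2.congr' ?_
    filter_upwards [eventually_ge_atTop (2:ℝ)] with N hN
    have hN0 : (0:ℝ) < N := by linarith
    have ha : (0:ℝ) < N ^ α := Real.rpow_pos_of_pos hN0 _
    have hd : (0:ℝ) < N + N ^ α - 1 := by linarith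
    have e1 : N ^ (α - 2) = N ^ α / N ^ 2 := by
      rw [show (2:ℝ) = ((2:ℕ):ℝ) by norm_num] at *
      rw [Real.rpow_sub hN0, Real.rpow_natCast]
    have e2 : N ^ (2 * α - 2) = N ^ (2 * α) / N ^ 2 := by
      rw [show (2:ℝ) = ((2:ℕ):ℝ) by norm_num]
      rw [Real.rpow_sub hN0, Real.rpow_natCast]
    rw [e1, e2]
    field_simp
  -- s/N → 1
  have hs : Tendsto (fun N : ℝ =>
      Real.sqrt (N ^ 2 - 4 * N ^ α + 4 * N ^ (2 * α) / (N + N ^ α - 1)) / N) atTop (𝓝 1) := by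
    have h2 : Tendsto (fun N : ℝ =>
        Real.sqrt ((N ^ 2 - 4 * N ^ α + 4 * N ^ (2 * α) / (N + N ^ α - 1)) / N ^ 2))
        atTop (𝓝 1) := by
      have := (Real.continuous_sqrt.tendsto 1).comp hT
      simpa [Function.comp_def] using this
    refine h2.congr' ?_
    filter_upwards [eventually_ge_atTop (4:ℝ)] with N hN
    have hN0 : (0:ℝ) < N := by linarith
    have ha : (0:ℝ) < N ^ α := Real.rpow_pos_of_pos hN0 _
    have haN : N ^ α ≤ N := by
      calc N ^ α ≤ N ^ (1:ℝ) :=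
        Real.rpow_le_rpow_of_exponent_le (by linarith) (by linarith)
      _ = N := Real.rpow_one N
    have hd : (0:ℝ) < N + N ^ α - 1 := by linarith
    have hS0 : (0:ℝ) ≤ N ^ 2 - 4 * N ^ α + 4 * N ^ (2 * α) / (N + N ^ α - 1) := by
      have h3 : (0:ℝ) ≤ 4 * N ^ (2 * α) / (N + N ^ α - 1) := by positivity
      nlinarith
    rw [Real.sqrt_div hS0, Real.sqrt_sq hN0.le]
  -- combine
  have hmain : Tendsto (fun N : ℝ =>
      1 - 2 / (((N + N ^ α - 1) / N) *
        ((Real.sqrt (N ^ 2 - 4 * N ^ α + 4 * N ^ (2 * α) / (N + N ^ α - 1)) + N) / N)))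
      atTop (𝓝 0) := by
    have hB : Tendsto (fun N : ℝ =>
        (Real.sqrt (N ^ 2 - 4 * N ^ α + 4 * N ^ (2 * α) / (N + N ^ α - 1)) + N) / N)
        atTop (𝓝 2) := by
      have h3 : Tendsto (fun N : ℝ =>
          Real.sqrt (N ^ 2 - 4 * N ^ α + 4 * N ^ (2 * α) / (N + N ^ α - 1)) / N + 1)
          atTop (𝓝 2) := by
        have h2 := hs.add (tendsto_const_nhds (x := (1:ℝ)) (f := atTop))
        norm_num at h2
        exact h2
      refine h3.congr' ?_
      filter_upwards [eventually_gt_atTop (0:ℝ)] with N hN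
      field_simp
    have hAB : Tendsto (fun N : ℝ => ((N + N ^ α - 1) / N) *
        ((Real.sqrt (N ^ 2 - 4 * N ^ α + 4 * N ^ (2 * α) / (N + N ^ α - 1)) + N) / N))
        atTop (𝓝 2) := by simpa using hA.mul hB
    have := (tendsto_const_nhds (x := (1:ℝ)) (f := atTop)).sub
      ((tendsto_const_nhds (x := (2:ℝ)) (f := atTop)).div hAB (by norm_num))
    simpa using this
  refine hmain.congr' ?_
  filter_upwards [eventually_ge_atTop (4:ℝ)] with N hN
  have hN0 : (0:ℝ) < N := by linarith
  set a := N ^ α with ha_def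
  have ha : (0:ℝ) < a := Real.rpow_pos_of_pos hN0 _
  have haN : a ≤ N := by
    calc a ≤ N ^ (1:ℝ) := Real.rpow_le_rpow_of_exponent_le (by linarith) (by linarith)
    _ = N := Real.rpow_one N
  have hd : (0:ℝ) < N + a - 1 := by linarith
  have h2a : N ^ (2 * α) = a ^ 2 := by
    rw [ha_def, ← Real.rpow_natCast (N ^ α) 2, ← Real.rpow_mul hN0.le]
    norm_num [mul_comm]
  have hg : N ^ (α - 2) = a / N ^ 2 := by
    rw [show (2:ℝ) = ((2:ℕ):ℝ) by norm_num, Real.rpow_sub hN0, Real.rpow_natCast]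
  set S := N ^ 2 - 4 * a + 4 * N ^ (2 * α) / (N + a - 1) with hS_def
  have hS0 : (0:ℝ) ≤ S := by
    have h3 : (0:ℝ) ≤ 4 * N ^ (2 * α) / (N + a - 1) := by positivity
    have h4 : 4 * a ≤ 4 * N := by linarith
    have h5 : 4 * N ≤ N ^ 2 := by nlinarith
    rw [hS_def]
    linarith
  set s := Real.sqrt S with hs_def
  have hs0 : 0 ≤ s := Real.sqrt_nonneg _
  have hs2 : s ^ 2 = S := Real.sq_sqrt hS0
  have hsN : (0:ℝ) < s + N := by linarith
  have hN1 : (0:ℝ) < N - 1 := by linarith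
  -- key algebraic identity
  have hsn : (s - N) * (s + N) * (N + a - 1) = 4 * a * (1 - N) := by
    have e : (s - N) * (s + N) * (N + a - 1) = (s ^ 2 - N ^ 2) * (N + a - 1) := by ring
    rw [e, hs2, hS_def, h2a]
    field_simp
    ring
  have hsn2 : s - N = 4 * a * (1 - N) / ((N + a - 1) * (s + N)) := by
    rw [eq_div_iff (mul_pos hd hsN).ne']
    linear_combination hsn
  show 1 - 2 / (((N + a - 1) / N) * ((s + N) / N))
      = ((N - 2 + s) / (2 * (N - 1)) - (1 - N ^ (α - 2))) / N ^ (α - 2)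
  rw [hg]
  have key : (N - 2 + s) / (2 * (N - 1)) - (1 - a / N ^ 2)
      = a / N ^ 2 - 2 * a / ((N + a - 1) * (s + N)) := by
    have e : (N - 2 + s) / (2 * (N - 1)) - (1 - a / N ^ 2)
        = (s - N) / (2 * (N - 1)) + a / N ^ 2 := by
      field_simp
      ring
    rw [e, hsn2]
    field_simp
    ring
  rw [key]
  field_simp
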